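/- For all natural numbers t ≥ 1 and d ≥ 1, there exists a family Σ of at most ⌈t^d/2⌉ linear orders on the set (Fin t)^d of cells of the t × ⋯ × t grid of a d-dimensional cube such that for any two distinct cells c₁, c₂ ∈ (Fin t)^d there exists an order σ ∈ Σ in which c₁ and c₂ are adjacent, i.e., no cell c satisfies c₁ ≺_σ c ≺_σ c₂ or c₂ ≺_σ c ≺_σ c₁. -/

import Mathlib

/-- Position function of the zigzag Hamiltonian path on `ZMod (2*n)`. -/
private def gfun (n : ℕ) (x : ZMod (2 * n)) : ℕ :=
  if x.val = 0 then 0 else if x.val ≤ n then 2 * x.val - 1 else 2 * (2 * n - x.val)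

private lemma gfun_inj (n : ℕ) (hn : 1 ≤ n) : Function.Injective (gfun n) := by
  have : NeZero (2 * n) := ⟨by omega⟩
  intro x y h
  have hx := ZMod.val_lt x
  have hy := ZMod.val_lt y
  have hxy : x.val = y.val := by
    unfold gfun at h
    split_ifs at h <;> omega
  exact ZMod.val_injective _ hxy

private lemma gfun_natCast (n m : ℕ) (hm : m < 2 * n) :
    gfun n ((m : ℕ) : ZMod (2 * n)) =
      if m = 0 then 0 else if m ≤ n then 2 * m - 1 else 2 * (2 * n - m) := by
  unfold gfun
  rw [ZMod.val_natCast, Nat.mod_eq_of_lt hm]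

private lemma key_aux (n : ℕ) (hn : 1 ≤ n) (a b : ZMod (2 * n))
    (hd1 : 1 ≤ (b - a).val) (hdn : (b - a).val ≤ n) :
    ∃ k : ℕ, k < n ∧
      (gfun n (a - (k : ℕ)) + 1 = gfun n (b - (k : ℕ)) ∨
       gfun n (b - (k : ℕ)) + 1 = gfun n (a - (k : ℕ))) := by
  have hNZ : NeZero (2 * n) := ⟨by omega⟩
  set d := (b - a).val with hd
  set q := d / 2 with hq
  set i₀ := a + (q : ZMod (2 * n)) with hi₀
  have hi : i₀.val < 2 * n := ZMod.val_lt i₀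
  have hba : ((d : ℕ) : ZMod (2 * n)) = b - a := ZMod.natCast_rightInverse (b - a)
  have hqd : q ≤ d := Nat.div_le_self _ _
  have hq1 : 1 ≤ d - q := by omega
  have hqn : q < n := by omega
  rcases Nat.lt_or_ge i₀.val n with hlt | hge
  · -- k = i₀.val
    refine ⟨i₀.val, hlt, ?_⟩
    have hk : ((i₀.val : ℕ) : ZMod (2 * n)) = i₀ := ZMod.natCast_rightInverse i₀
    have ha' : a - ((i₀.val : ℕ) : ZMod (2 * n)) = -(q : ℕ) := by
      rw [hk, hi₀]; ring
    have hb' : b - ((i₀.val : ℕ) : ZMod (2 * n)) = ((d - q : ℕ) : ZMod (2 * n)) := by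
      rw [hk, hi₀, Nat.cast_sub hqd, hba]; ring
    have hgb : gfun n (b - ((i₀.val : ℕ) : ZMod (2 * n))) = 2 * (d - q) - 1 := by
      rw [hb', gfun_natCast n _ (by omega)]
      simp only [if_neg (by omega : ¬ d - q = 0), if_pos (by omega : d - q ≤ n)]
    by_cases hq0 : q = 0
    · have ha'' : a - ((i₀.val : ℕ) : ZMod (2 * n)) = ((0 : ℕ) : ZMod (2 * n)) := by
        rw [ha', hq0]; simp
      have hga : gfun n (a - ((i₀.val : ℕ) : ZMod (2 * n))) = 0 := by
        rw [ha'', gfun_natCast n 0 (by omega)]; simp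
      rw [hga, hgb]; omega
    · have hneg : (-(q : ℕ) : ZMod (2 * n)) = ((2 * n - q : ℕ) : ZMod (2 * n)) := by
        have h2 : ((2 * n - q : ℕ) : ZMod (2 * n)) + (q : ℕ) = 0 := by
          rw [← Nat.cast_add]
          have : 2 * n - q + q = 2 * n := by omega
          rw [this]; exact_mod_cast ZMod.natCast_self (2 * n)
        exact (eq_neg_of_add_eq_zero_left h2).symm
      have hga : gfun n (a - ((i₀.val : ℕ) : ZMod (2 * n))) = 2 * q := by
        rw [ha', hneg, gfun_natCast n _ (by omega)]
        simp only [if_neg (by omega : ¬ 2 * n - q = 0), if_neg (by omega : ¬ 2 * n - q ≤ n)]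
        omega
      rw [hga, hgb]; omega
  · -- k = i₀.val - n
    refine ⟨i₀.val - n, by omega, ?_⟩
    have hk : ((i₀.val - n : ℕ) : ZMod (2 * n)) = i₀ - (n : ℕ) := by
      rw [Nat.cast_sub hge, ZMod.natCast_rightInverse i₀]
    have ha' : a - ((i₀.val - n : ℕ) : ZMod (2 * n)) = ((n - q : ℕ) : ZMod (2 * n)) := by
      rw [hk, hi₀, Nat.cast_sub (by omega : q ≤ n)]; ring
    have hb' : b - ((i₀.val - n : ℕ) : ZMod (2 * n)) = ((d - q + n : ℕ) : ZMod (2 * n)) := by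
      rw [hk, hi₀, Nat.cast_add, Nat.cast_sub hqd, hba]; ring
    have hga : gfun n (a - ((i₀.val - n : ℕ) : ZMod (2 * n))) = 2 * (n - q) - 1 := by
      rw [ha', gfun_natCast n _ (by omega)]
      simp only [if_neg (by omega : ¬ n - q = 0), if_pos (by omega : n - q ≤ n)]
    rcases Nat.lt_or_ge (d - q + n) (2 * n) with hlt2 | hge2
    · have hgb : gfun n (b - ((i₀.val - n : ℕ) : ZMod (2 * n))) = 2 * (2 * n - (d - q + n)) := by
        rw [hb', gfun_natCast n _ hlt2]
        simp only [if_neg (by omega : ¬ d - q + n = 0), if_neg (by omega : ¬ d - q + n ≤ n)]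
      rw [hga, hgb]; omega
    · -- corner case: d - q + n = 2 * n, i.e. n = 1
      have heq : d - q + n = 2 * n := by omega
      have hb'' : b - ((i₀.val - n : ℕ) : ZMod (2 * n)) = ((0 : ℕ) : ZMod (2 * n)) := by
        rw [hb', heq]; exact_mod_cast ZMod.natCast_self (2 * n)
      have hgb : gfun n (b - ((i₀.val - n : ℕ) : ZMod (2 * n))) = 0 := by
        rw [hb'', gfun_natCast n 0 (by omega)]; simp
      rw [hga, hgb]; omega

private lemma key (n : ℕ) (hn : 1 ≤ n) (a b : ZMod (2 * n)) (hab : a ≠ b) :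
    ∃ k : ℕ, k < n ∧
      (gfun n (a - (k : ℕ)) + 1 = gfun n (b - (k : ℕ)) ∨
       gfun n (b - (k : ℕ)) + 1 = gfun n (a - (k : ℕ))) := by
  have hNZ : NeZero (2 * n) := ⟨by omega⟩
  have hba : b - a ≠ 0 := sub_ne_zero.mpr hab.symm
  have h1 : 1 ≤ (b - a).val := by
    have := (ZMod.val_ne_zero (b - a)).mpr hba
    omega
  rcases le_or_gt (b - a).val n with hle | hgt
  · exact key_aux n hn a b h1 hle
  · have hneg : a - b = -(b - a) := by ring
    have hval : (a - b).val = 2 * n - (b - a).val := by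
      rw [hneg, ZMod.neg_val, if_neg hba]
    have hlt := ZMod.val_lt (b - a)
    obtain ⟨k, hk, hcons⟩ := key_aux n hn b a (by omega) (by omega)
    exact ⟨k, hk, hcons.symm⟩

/-- there are at most `⌈t^d/2⌉` linear orders on the cells `(Fin t)^d` of the
`t × ⋯ × t` grid of a `d`-dimensional cube such that every pair of distinct cells is
adjacent in one of them. -/
theorem exists_grid_orderings_every_pair_adjacent (t d : ℕ) (ht : 1 ≤ t) (hd : 1 ≤ d) :
    ∃ (m : ℕ) (σ : Fin m → ((Fin d → Fin t) → (Fin d → Fin t) → Prop)),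
      m ≤ (t ^ d + 1) / 2 ∧
      (∀ k, IsStrictTotalOrder (Fin d → Fin t) (σ k)) ∧
      ∀ c₁ c₂ : Fin d → Fin t, c₁ ≠ c₂ →
        ∃ k, ∀ c : Fin d → Fin t,
          ¬(σ k c₁ c ∧ σ k c c₂) ∧ ¬(σ k c₂ c ∧ σ k c c₁) := by
  have hN1 : 1 ≤ t ^ d := Nat.one_le_pow _ _ ht
  set n : ℕ := (t ^ d + 1) / 2 with hn
  have hn1 : 1 ≤ n := by omega
  have hNZ : NeZero (2 * n) := ⟨by omega⟩
  have hcard : Fintype.card (Fin d → Fin t) ≤ Fintype.card (ZMod (2 * n)) := by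
    rw [ZMod.card]
    simp only [Fintype.card_fun, Fintype.card_fin]
    omega
  obtain ⟨e⟩ := Function.Embedding.nonempty_of_card_le hcard
  refine ⟨n, fun k x y => gfun n (e x - ((k : ℕ) : ZMod (2 * n))) <
      gfun n (e y - ((k : ℕ) : ZMod (2 * n))), le_refl _, ?_, ?_⟩
  · intro k
    have hinj : Function.Injective
        (fun x : Fin d → Fin t => gfun n (e x - ((k : ℕ) : ZMod (2 * n)))) := by
      intro x y hxy
      have h2 := gfun_inj n hn1 hxy
      exact e.injective (by
        have h3 := sub_left_injective h2
        exact h3)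
    exact
      { trichotomous := fun x y hnxy hnyx => by
          rcases lt_trichotomy (gfun n (e x - ((k : ℕ) : ZMod (2 * n))))
            (gfun n (e y - ((k : ℕ) : ZMod (2 * n)))) with h | h | h
          · exact absurd h hnxy
          · exact hinj h
          · exact absurd h hnyx
        irrefl := fun x => lt_irrefl _
        trans := fun x y z => lt_trans }
  · intro c₁ c₂ hne
    have hne' : e c₁ ≠ e c₂ := fun h => hne (e.injective h)
    obtain ⟨k, hk, hcons⟩ := key n hn1 (e c₁) (e c₂) hne'
    refine ⟨⟨k, hk⟩, fun c => ?_⟩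
    constructor <;> rintro ⟨h1, h2⟩ <;> simp only [Fin.val_mk] at h1 h2 <;> omega
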